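/- For p = q = r = 0.05, feedback strictly enlarges the achievable secrecy rate region: Din(0.05,0.05,0.05) ⊊ Din1(0.05,0.05,0.05). In particular, the point (R₁,R₂) = (1.0, 0.9) belongs to Din1(0.05,0.05,0.05) but not to Din(0.05,0.05,0.05). -/

import Mathlib

/-- The binary entropy function to base 2, with the convention h(0)=h(1)=0
(automatic since `Real.logb 2 0 = 0`). -/
noncomputable def binEnt (x : ℝ) : ℝ := -x * Real.logb 2 x - (1 - x) * Real.logb 2 (1 - x)

/-- Non-feedback inner bound for the Dueck-type example with `Z₁ → Z₀ → Z₂`. -/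
noncomputable def Din (p q r : ℝ) : Set (ℝ × ℝ) :=
  {R : ℝ × ℝ | 0 ≤ R.1 ∧ R.1 ≤ 1 - binEnt q ∧ 0 ≤ R.2 ∧ R.2 ≤ 1 - binEnt r}

/-- Secret-key feedback inner bound for the Dueck-type example with `Z₁ → Z₀ → Z₂`. -/
noncomputable def Din1 (p q r : ℝ) : Set (ℝ × ℝ) :=
  {R : ℝ × ℝ | 0 ≤ R.1 ∧ 0 ≤ R.2 ∧ R.1 ≤ 1 ∧ R.2 ≤ 1 ∧
    R.1 ≤ 2 - binEnt p - binEnt q ∧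
    R.2 ≤ 2 - binEnt p - binEnt r ∧
    R.1 + R.2 ≤ 3 - binEnt p - binEnt q - binEnt r}

/-- Hybrid feedback inner bound for the Dueck-type example with `Z₁ → Z₀ → Z₂`. -/
noncomputable def Din2 (p q r : ℝ) : Set (ℝ × ℝ) :=
  {R : ℝ × ℝ | 0 ≤ R.1 ∧ 0 ≤ R.2 ∧ R.1 ≤ 1 + binEnt q ∧ R.2 ≤ 1 + binEnt r ∧
    R.1 ≤ 2 - binEnt p - binEnt q ∧
    R.2 ≤ 2 - binEnt p - binEnt r ∧
    R.1 + R.2 ≤ 3 - binEnt p - binEnt q - binEnt r}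

/-- Cut-set outer bound for the Dueck-type example with `Z₁ → Z₀ → Z₂`. -/
noncomputable def Dout (p q r : ℝ) : Set (ℝ × ℝ) :=
  {R : ℝ × ℝ | 0 ≤ R.1 ∧ 0 ≤ R.2 ∧
    R.1 ≤ 2 - binEnt p - binEnt q ∧
    R.2 ≤ 2 - binEnt p - binEnt r ∧
    R.1 + R.2 ≤ 3 - binEnt p - binEnt q - binEnt r}

lemma one_sub_inv_le_log {x : ℝ} (hx : 0 < x) : 1 - x⁻¹ ≤ Real.log x := by
  have h := Real.log_le_sub_one_of_pos (x := x⁻¹) (by positivity)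
  rw [Real.log_inv] at h
  linarith

lemma log20_bounds : 4 * Real.log 2 + 0.2 ≤ Real.log 20 ∧
    Real.log 20 ≤ 4 * Real.log 2 + 0.25 := by
  have h20 : (20:ℝ) = 2 ^ 4 * (5/4) := by norm_num
  have hl : Real.log 20 = 4 * Real.log 2 + Real.log (5/4) := by
    rw [h20, Real.log_mul (by norm_num) (by norm_num), Real.log_pow]
    push_cast; ring
  have h1 : Real.log (5/4) ≤ 5/4 - 1 := Real.log_le_sub_one_of_pos (by norm_num)
  have h2 : 1 - (5/4:ℝ)⁻¹ ≤ Real.log (5/4) := one_sub_inv_le_log (by norm_num)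
  norm_num at h1 h2 ⊢
  constructor <;> linarith

lemma binEnt_himself : binEnt 0.05 = (0.05 * Real.log 20 + 0.95 * Real.log (20/19)) / Real.log 2 := by
  have h2 : Real.log 2 ≠ 0 := by
    have := Real.log_pos (by norm_num : (1:ℝ) < 2); linarith
  have e1 : Real.logb 2 0.05 = -Real.log 20 / Real.log 2 := by
    rw [Real.logb, show (0.05:ℝ) = 20⁻¹ by norm_num, Real.log_inv]
  have e2 : Real.logb 2 0.95 = -Real.log (20/19) / Real.log 2 := by
    rw [Real.logb, show (0.95:ℝ) = (20/19)⁻¹ by norm_num, Real.log_inv]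
  rw [binEnt, show (1:ℝ) - 0.05 = 0.95 by norm_num, e1, e2]
  field_simp
  ring

lemma binEnt_bounds : 0 < binEnt 0.05 ∧ binEnt 0.05 ≤ 0.3 := by
  have l2lo := Real.log_two_gt_d9
  have l2hi := Real.log_two_lt_d9
  have l20 := log20_bounds
  have hA : Real.log (20/19) ≤ 20/19 - 1 := Real.log_le_sub_one_of_pos (by norm_num)
  have hB : 1 - (20/19:ℝ)⁻¹ ≤ Real.log (20/19) := one_sub_inv_le_log (by norm_num)
  rw [binEnt_himself]
  have hnum_lo : (0.19:ℝ) ≤ 0.05 * Real.log 20 + 0.95 * Real.log (20/19) := by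
    norm_num at hB ⊢; nlinarith
  have hnum_hi : 0.05 * Real.log 20 + 0.95 * Real.log (20/19) ≤ 0.20782 := by
    norm_num at hA ⊢; nlinarith
  have hl2pos : (0:ℝ) < Real.log 2 := by linarith
  constructor
  · exact div_pos (by linarith) hl2pos
  · rw [div_le_iff₀ hl2pos]; nlinarith

/-- For `p = q = r = 0.05`, feedback strictly enlarges the achievable secrecy
rate region; the point `(1.0, 0.9)` witnesses the gap. -/
theorem Din_ssubset_Din1 :
    Din 0.05 0.05 0.05 ⊂ Din1 0.05 0.05 0.05 ∧
    ((1.0, 0.9) : ℝ × ℝ) ∈ Din1 0.05 0.05 0.05 ∧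
    ((1.0, 0.9) : ℝ × ℝ) ∉ Din 0.05 0.05 0.05 := by
  obtain ⟨hpos, hle⟩ := binEnt_bounds
  have hmem : ((1.0, 0.9) : ℝ × ℝ) ∈ Din1 0.05 0.05 0.05 := by
    simp only [Din1, Set.mem_setOf_eq]
    norm_num
    refine ⟨by linarith, by linarith, by linarith⟩
  have hnot : ((1.0, 0.9) : ℝ × ℝ) ∉ Din 0.05 0.05 0.05 := by
    simp only [Din, Set.mem_setOf_eq]
    push_neg
    intro _ h _
    norm_num at h
    linarith
  refine ⟨⟨?_, fun hsub => hnot (hsub hmem)⟩, hmem, hnot⟩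
  rintro ⟨x, y⟩ ⟨h1, h2, h3, h4⟩
  simp only [Din1, Set.mem_setOf_eq] at *
  exact ⟨h1, h3, by linarith, by linarith, by linarith, by linarith, by linarith⟩
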